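/- arXiv:1204.1147 — 2 statements merged into one kernel-verified Lean document; each statement's English description precedes it below -/
import Mathlib

section
/- Let f : (X → ℝ) ⇀ (X → ℝ) be monotone and order-concave, let ρ be in the domain of f, and let X₁ ⊎ X₂ = X be a partition such that X₁ →^{f,ρ} X₂ (locally at ρ, the X₁-components of f do not depend on decreasing the X₂-coordinates). Then for every ρ' : X₂ → ℝ with ρ' ≥ ρ|_{X₂} and ρ ⊕ ρ' ∈ dom(f), we have (f(ρ ⊕ ρ'))|_{X₁} = (f(ρ))|_{X₁}. -/
open Classical in
/-- Override `ρ` on the set `S` by `ρ'` (the operator `ρ ⊕ ρ'|_S`). -/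
noncomputable def ovr {X : Type*} (S : Set X) (ρ ρ' : X → ℝ) : X → ℝ :=
  fun x => if x ∈ S then ρ' x else ρ x

/-- Order-convex set of variable assignments. -/
def OrderConvexSet {X : Type*} (S : Set (X → ℝ)) : Prop :=
  ∀ x ∈ S, ∀ y ∈ S, (x ≤ y ∨ y ≤ x) → ∀ t : ℝ, 0 ≤ t → t ≤ 1 →
    t • x + (1 - t) • y ∈ S

/-- Order-concave partial function with domain `D`. -/
def OrderConcaveFnOn {X : Type*} (f : (X → ℝ) → (X → ℝ)) (D : Set (X → ℝ)) : Prop :=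
  OrderConvexSet D ∧
  ∀ x ∈ D, ∀ y ∈ D, (x ≤ y ∨ y ≤ x) → ∀ t : ℝ, 0 ≤ t → t ≤ 1 →
    t • f x + (1 - t) • f y ≤ f (t • x + (1 - t) • y)

lemma ovr_empty {X : Type*} (ρ ρ' : X → ℝ) : ovr (∅ : Set X) ρ ρ' = ρ := by
  funext x; simp [ovr]

/-- If `f` is monotone and order-concave, `ρ ∈ dom f`, and the
partition `X₁ ⊎ X₂ = X` satisfies `X₁ →^{f,ρ} X₂`, then increasing the
`X₂`-coordinates does not change the `X₁`-components of `f` at `ρ`. -/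
theorem independent_upward {X : Type*} [Fintype X]
    (f : (X → ℝ) → (X → ℝ)) (D : Set (X → ℝ))
    (hmono : ∀ a ∈ D, ∀ b ∈ D, a ≤ b → f a ≤ f b)
    (hconc : OrderConcaveFnOn f D)
    (ρ : X → ℝ) (hρ : ρ ∈ D)
    (X₁ X₂ : Set X) (hdisj : Disjoint X₁ X₂) (hcover : X₁ ∪ X₂ = Set.univ)
    (harrow : X₁ = ∅ ∨ X₂ = ∅ ∨
      ∃ ρ'' : X → ℝ, ovr X₂ ρ ρ'' ∈ D ∧ (∀ x ∈ X₂, ρ'' x < ρ x) ∧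
        ∀ x ∈ X₁, f (ovr X₂ ρ ρ'') x = f ρ x) :
    ∀ ρ' : X → ℝ, (∀ x ∈ X₂, ρ x ≤ ρ' x) → ovr X₂ ρ ρ' ∈ D →
      ∀ x ∈ X₁, f (ovr X₂ ρ ρ') x = f ρ x := by
  intro ρ' hge hb x hx1
  by_cases h2 : X₂ = (∅ : Set X)
  · subst h2; rw [ovr_empty]
  rcases harrow with h1 | h2' | ⟨ρ'', ha, hlt, heq⟩
  · exact absurd (h1 ▸ hx1) (Set.notMem_empty x)
  · exact absurd h2' h2
  -- set up a, b
  set a : X → ℝ := ovr X₂ ρ ρ'' with ha_def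
  set b : X → ℝ := ovr X₂ ρ ρ' with hb_def
  have hx2 : x ∉ X₂ := Set.disjoint_left.mp hdisj hx1
  have hab : ∀ y, a y ≤ ρ y ∧ ρ y ≤ b y := by
    intro y
    by_cases hy : y ∈ X₂
    · simp only [ha_def, hb_def, ovr, if_pos hy]
      exact ⟨(hlt y hy).le, hge y hy⟩
    · simp [ha_def, hb_def, ovr, if_neg hy, le_refl]
  have haρ : a ≤ ρ := fun y => (hab y).1
  have hρb : ρ ≤ b := fun y => (hab y).2
  -- choose t
  have h2ne : X₂.Nonempty := Set.nonempty_iff_ne_empty.mpr h2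
  classical
  have hfin : X₂.Finite := Set.toFinite X₂
  have hfne : hfin.toFinset.Nonempty := by
    rwa [Set.Finite.toFinset_nonempty]
  set t : ℝ := hfin.toFinset.inf' hfne (fun y => (ρ y - ρ'' y) / (ρ' y - ρ'' y)) with ht_def
  have hden : ∀ y ∈ X₂, 0 < ρ' y - ρ'' y := fun y hy =>
    sub_pos.mpr ((hlt y hy).trans_le (hge y hy))
  have ht0 : 0 < t := by
    rw [ht_def, Finset.lt_inf'_iff]
    intro y hy
    have hy2 : y ∈ X₂ := (Set.Finite.mem_toFinset hfin).mp hy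
    exact div_pos (sub_pos.mpr (hlt y hy2)) (hden y hy2)
  have ht1 : t ≤ 1 := by
    obtain ⟨y, hy⟩ := hfne
    have hy2 : y ∈ X₂ := (Set.Finite.mem_toFinset hfin).mp hy
    refine le_trans (Finset.inf'_le (fun y => (ρ y - ρ'' y) / (ρ' y - ρ'' y)) hy) ?_
    rw [div_le_one (hden y hy2)]
    have := hge y hy2
    linarith
  have htle : ∀ y ∈ X₂, t * (ρ' y - ρ'' y) ≤ ρ y - ρ'' y := by
    intro y hy
    have h := Finset.inf'_le (fun y => (ρ y - ρ'' y) / (ρ' y - ρ'' y))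
      ((Set.Finite.mem_toFinset hfin).mpr hy)
    calc t * (ρ' y - ρ'' y) ≤ (ρ y - ρ'' y) / (ρ' y - ρ'' y) * (ρ' y - ρ'' y) := by
          exact mul_le_mul_of_nonneg_right h (hden y hy).le
      _ = ρ y - ρ'' y := div_mul_cancel₀ _ (hden y hy).ne'
  -- the point c
  set c : X → ℝ := t • b + (1 - t) • a with hc_def
  have hcD : c ∈ D := hconc.1 b hb a ha (Or.inr (haρ.trans hρb)) t ht0.le ht1
  have hcρ : c ≤ ρ := by
    intro y
    by_cases hy : y ∈ X₂
    · have := htle y hy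
      simp only [hc_def, Pi.add_apply, Pi.smul_apply, smul_eq_mul,
        hb_def, ha_def, ovr, if_pos hy]
      nlinarith
    · simp only [hc_def, Pi.add_apply, Pi.smul_apply, smul_eq_mul,
        hb_def, ha_def, ovr, if_neg hy]
      linarith
  have hconc2 := hconc.2 b hb a ha (Or.inr (haρ.trans hρb)) t ht0.le ht1
  have h1 : f c ≤ f ρ := hmono c hcD ρ hρ hcρ
  have h2' : f ρ ≤ f b := hmono ρ hρ b hb hρb
  have key : t * f b x + (1 - t) * f a x ≤ f c x := hconc2 x
  have hfa : f a x = f ρ x := heq x hx1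
  have : f b x ≤ f ρ x := by
    have h1x := h1 x
    rw [hfa] at key
    nlinarith
  exact le_antisymm this (h2' x)
end

section
/- Let f : (X → ℝ) ⇀ (X → ℝ) be monotone and order-concave with upward closed domain, and let ρ* be a feasible fixpoint of f. Then ρ* is the greatest pre-fixpoint of f: every ρ' ∈ dom(f) with ρ' ≤ f(ρ') satisfies ρ' ≤ ρ*. -/
/-- The dependency relation `A →^{f,ρ} B`: `A = ∅`, or `B = ∅`, or one can
strictly decrease `ρ` on `B` (staying in the domain `D`) without changing the
`A`-components of `f`. -/
def Arrow {X : Type*} (f : (X → ℝ) → (X → ℝ)) (D : Set (X → ℝ))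
    (ρ : X → ℝ) (A B : Set X) : Prop :=
  A = ∅ ∨ B = ∅ ∨
    ∃ ρ' : X → ℝ, ovr B ρ ρ' ∈ D ∧ (∀ x ∈ B, ρ' x < ρ x) ∧
      ∀ x ∈ A, f (ovr B ρ ρ') x = f ρ x

/-- Feasibility of a fixpoint `ρ*` of the partial function `f` with domain
`D`: there is a partition `P 0 ⊎ … ⊎ P (k-1) = X` ordered by the dependency
relation such that for each block `P j` there is a pre-fixpoint `σ₀` of
`f ← ρ*|_{X∖P j}` with `σ₀ ≪ ρ*` on `P j` whose least fixpoint above `σ₀` is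
`ρ*|_{P j}`. -/
def FeasibleFixpoint {X : Type*} (f : (X → ℝ) → (X → ℝ)) (D : Set (X → ℝ))
    (ρs : X → ℝ) : Prop :=
  ∃ (k : ℕ) (P : Fin k → Set X),
    (∀ i j : Fin k, i ≠ j → Disjoint (P i) (P j)) ∧
    (⋃ i, P i) = Set.univ ∧
    (∀ j : Fin k, Arrow f D ρs (⋃ i ∈ {i : Fin k | i ≤ j}, P i)
      (⋃ i ∈ {i : Fin k | j < i}, P i)) ∧
    (∀ j : Fin k, ∃ σ₀ : X → ℝ, σ₀ ∈ D ∧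
      (∀ x, x ∉ P j → σ₀ x = ρs x) ∧
      (∀ x ∈ P j, σ₀ x < ρs x) ∧
      (∀ x ∈ P j, σ₀ x ≤ f σ₀ x) ∧
      (∀ τ : X → ℝ, τ ∈ D → (∀ x, x ∉ P j → τ x = ρs x) →
        (∀ x ∈ P j, f τ x = τ x) → σ₀ ≤ τ → ρs ≤ τ))

lemma ovr_mem {X : Type*} {S : Set X} {ρ ρ' : X → ℝ} {x : X} (h : x ∈ S) :
    ovr S ρ ρ' x = ρ' x := if_pos h

lemma ovr_notMem {X : Type*} {S : Set X} {ρ ρ' : X → ℝ} {x : X} (h : x ∉ S) :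
    ovr S ρ ρ' x = ρ x := if_neg h

/-- A feasible fixpoint of a monotone and order-concave partial
function with upward closed domain is its greatest pre-fixpoint. -/
theorem feasible_fixpoint_greatest_prefixpoint {X : Type*} [Fintype X]
    (f : (X → ℝ) → (X → ℝ)) (D : Set (X → ℝ))
    (hDup : ∀ a ∈ D, ∀ b, a ≤ b → b ∈ D)
    (hmono : ∀ a ∈ D, ∀ b ∈ D, a ≤ b → f a ≤ f b)
    (hconc : OrderConcaveFnOn f D)
    (ρs : X → ℝ) (hρs : ρs ∈ D) (hfix : f ρs = ρs)
    (hfeas : FeasibleFixpoint f D ρs) :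
    ∀ ρ' ∈ D, ρ' ≤ f ρ' → ρ' ≤ ρs := by
  intro ρ' hρ'D hρ'pre
  obtain ⟨k, P, hdisj, hcover, harrow, hblock⟩ := hfeas
  set ρ : X → ℝ := ρ' ⊔ ρs with hρdef
  have hρsρ : ρs ≤ ρ := le_sup_right
  have hρ'ρ : ρ' ≤ ρ := le_sup_left
  have hρD : ρ ∈ D := hDup ρ' hρ'D ρ hρ'ρ
  have hρpre : ρ ≤ f ρ := by
    refine sup_le ?_ ?_
    · exact le_trans hρ'pre (hmono ρ' hρ'D ρ hρD hρ'ρ)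
    · have h := hmono ρs hρs ρ hρD hρsρ
      rw [hfix] at h
      exact h
  have hcov : ∀ x, ∃ i, x ∈ P i := by
    intro x
    have hx : x ∈ (⋃ i, P i) := hcover ▸ Set.mem_univ x
    simpa [Set.mem_iUnion] using hx
  -- Key per-block lemma.
  have key : ∀ j : Fin k, (∀ i : Fin k, i < j → ∀ x ∈ P i, ρ x = ρs x) →
      ∀ x ∈ P j, ρ x ≤ ρs x := by
    intro j hIH
    by_contra hcon
    push_neg at hcon
    obtain ⟨xh, hxhP, hxh⟩ := hcon
    have harr := harrow j
    set A : Set X := ⋃ i ∈ {i : Fin k | i ≤ j}, P i with hAdef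
    set B : Set X := ⋃ i ∈ {i : Fin k | j < i}, P i with hBdef
    have hmemA : ∀ x, x ∈ A ↔ ∃ i, i ≤ j ∧ x ∈ P i := by
      intro x
      simp only [hAdef, Set.mem_iUnion, Set.mem_setOf_eq, exists_prop]
    have hmemB : ∀ x, x ∈ B ↔ ∃ i, j < i ∧ x ∈ P i := by
      intro x
      simp only [hBdef, Set.mem_iUnion, Set.mem_setOf_eq, exists_prop]
    have hPjA : ∀ x ∈ P j, x ∈ A := fun x hx => (hmemA x).mpr ⟨j, le_refl j, hx⟩
    have hPjB : ∀ x, x ∈ P j → x ∉ B := by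
      intro x hx hxB
      obtain ⟨i, hji, hxi⟩ := (hmemB x).mp hxB
      exact Set.disjoint_left.mp (hdisj j i (ne_of_lt hji)) hx hxi
    have hABdisj : ∀ x, x ∈ A → x ∈ B → False := by
      intro x hxA hxB
      obtain ⟨i, hij, hxi⟩ := (hmemA x).mp hxA
      obtain ⟨i', hji', hxi'⟩ := (hmemB x).mp hxB
      exact Set.disjoint_left.mp (hdisj i i' (ne_of_lt (lt_of_le_of_lt hij hji'))) hxi hxi'
    -- Step 1: construct v, a pre-fixpoint on P j, equal to ρs off P j, above ρs,
    -- strictly above ρs at xh.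
    have hv : ∃ v : X → ℝ, v ∈ D ∧ ρs ≤ v ∧ (∀ x, x ∉ P j → v x = ρs x) ∧
        (∀ x ∈ P j, v x ≤ f v x) ∧ ρs xh < v xh := by
      rcases harr with hA | hB | ⟨w, hqD, hwlt, hwf⟩
      · exact absurd (hA ▸ hPjA xh hxhP) (Set.notMem_empty xh)
      · refine ⟨ρ, hρD, hρsρ, ?_, fun x _ => hρpre x, hxh⟩
        intro x hxP
        obtain ⟨i, hxi⟩ := hcov x
        rcases lt_trichotomy i j with h | h | h
        · exact hIH i h x hxi
        · exact absurd (h ▸ hxi) hxP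
        · have hxB : x ∈ B := (hmemB x).mpr ⟨i, h, hxi⟩
          rw [hB] at hxB
          exact absurd hxB (Set.notMem_empty x)
      · -- main case: use the arrow witness
        set q : X → ℝ := ovr B ρs w with hqdef
        have hqρ : q ≤ ρ := by
          intro x
          by_cases hx : x ∈ B
          · rw [hqdef, ovr_mem hx]
            exact le_trans (le_of_lt (hwlt x hx)) (hρsρ x)
          · rw [hqdef, ovr_notMem hx]
            exact hρsρ x
        have hden : ∀ x ∈ B, 0 < ρ x - w x := by
          intro x hx
          have h1 := hwlt x hx
          have h2 := hρsρ x
          linarith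
        have hnum : ∀ x ∈ B, 0 < ρs x - w x := by
          intro x hx
          have := hwlt x hx
          linarith
        set Bf := (Set.toFinite B).toFinset with hBf
        have hBfmem : ∀ x, x ∈ Bf ↔ x ∈ B := by
          intro x
          rw [hBf]
          exact Set.Finite.mem_toFinset _
        set m : ℝ := if hBne : Bf.Nonempty then
            Bf.inf' hBne (fun x => (ρs x - w x) / (ρ x - w x)) else 1 with hm
        have hm_pos : 0 < m := by
          rw [hm]
          split_ifs with hBne
          · rw [Finset.lt_inf'_iff]
            intro x hx
            have hxB := (hBfmem x).mp hx
            exact div_pos (hnum x hxB) (hden x hxB)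
          · norm_num
        have hm_le_one : m ≤ 1 := by
          rw [hm]
          split_ifs with hBne
          · obtain ⟨x, hx⟩ := hBne
            refine le_trans (Finset.inf'_le _ hx) ?_
            have hxB := (hBfmem x).mp hx
            rw [div_le_one (hden x hxB)]
            have := hρsρ x
            linarith
          · exact le_refl 1
        have hm_le : ∀ x ∈ B, m ≤ (ρs x - w x) / (ρ x - w x) := by
          intro x hx
          have hBne : Bf.Nonempty := ⟨x, (hBfmem x).mpr hx⟩
          rw [hm, dif_pos hBne]
          exact Finset.inf'_le _ ((hBfmem x).mpr hx)
        set t : ℝ := 1 - m / 2 with ht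
        have ht0 : 0 ≤ t := by rw [ht]; linarith
        have ht1 : t ≤ 1 := by rw [ht]; linarith
        have htlt1 : t < 1 := by rw [ht]; linarith
        have htB : ∀ x ∈ B, t * w x + (1 - t) * ρ x ≤ ρs x := by
          intro x hx
          have h1 : (1 - t) ≤ (ρs x - w x) / (ρ x - w x) := by
            have := hm_le x hx
            rw [ht]
            linarith
          have h2 : (1 - t) * (ρ x - w x) ≤ ρs x - w x :=
            (le_div_iff₀ (hden x hx)).mp h1
          nlinarith
        set u : X → ℝ := t • q + (1 - t) • ρ with hu
        have huD : u ∈ D := hconc.1 q hqD ρ hρD (Or.inl hqρ) t ht0 ht1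
        have hu_apply : ∀ x, u x = t * q x + (1 - t) * ρ x := by
          intro x
          rw [hu]
          simp [smul_eq_mul]
        have hconcu := hconc.2 q hqD ρ hρD (Or.inl hqρ) t ht0 ht1
        have hfuA : ∀ x ∈ A, u x ≤ f u x := by
          intro x hxA
          have hxB : x ∉ B := fun hxB => hABdisj x hxA hxB
          have hqx : q x = ρs x := by rw [hqdef, ovr_notMem hxB]
          have h1 : t * f q x + (1 - t) * f ρ x ≤ f u x := by
            have h := hconcu x
            simpa [smul_eq_mul] using h
          have h2 : f q x = ρs x := by
            have h3 := hwf x hxA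
            rw [hqdef, h3, hfix]
          rw [h2] at h1
          have h3 : ρ x ≤ f ρ x := hρpre x
          have h4 : (1 - t) * ρ x ≤ (1 - t) * f ρ x :=
            mul_le_mul_of_nonneg_left h3 (by linarith)
          rw [hu_apply x, hqx]
          linarith
        set v : X → ℝ := ovr B u ρs with hvdef
        have huv : u ≤ v := by
          intro x
          by_cases hx : x ∈ B
          · rw [hvdef, ovr_mem hx, hu_apply, hqdef, ovr_mem hx]
            exact htB x hx
          · rw [hvdef, ovr_notMem hx]
        have hvD : v ∈ D := hDup u huD v huv
        have hρsv : ρs ≤ v := by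
          intro x
          by_cases hx : x ∈ B
          · rw [hvdef, ovr_mem hx]
          · rw [hvdef, ovr_notMem hx, hu_apply, hqdef, ovr_notMem hx]
            have := hρsρ x
            nlinarith
        have hvoff : ∀ x, x ∉ P j → v x = ρs x := by
          intro x hxP
          by_cases hx : x ∈ B
          · rw [hvdef, ovr_mem hx]
          · have hxA : x ∈ A := by
              obtain ⟨i, hxi⟩ := hcov x
              rcases le_or_gt i j with h | h
              · exact (hmemA x).mpr ⟨i, h, hxi⟩
              · exact absurd ((hmemB x).mpr ⟨i, h, hxi⟩) hx
            obtain ⟨i, hij, hxi⟩ := (hmemA x).mp hxA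
            have hilt : i < j := lt_of_le_of_ne hij (fun h => hxP (h ▸ hxi))
            have hρx : ρ x = ρs x := hIH i hilt x hxi
            rw [hvdef, ovr_notMem hx, hu_apply, hqdef, ovr_notMem hx, hρx]
            ring
        have hvpre : ∀ x ∈ P j, v x ≤ f v x := by
          intro x hxP
          have hxA : x ∈ A := hPjA x hxP
          have hxB : x ∉ B := hPjB x hxP
          have h1 : u x ≤ f u x := hfuA x hxA
          have h2 : f u x ≤ f v x := hmono u huD v hvD huv x
          have h3 : v x = u x := by rw [hvdef, ovr_notMem hxB]
          linarith
        have hvxh : ρs xh < v xh := by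
          have hxB : xh ∉ B := hPjB xh hxhP
          rw [hvdef, ovr_notMem hxB, hu_apply, hqdef, ovr_notMem hxB]
          nlinarith [mul_pos (show (0:ℝ) < 1 - t by linarith)
            (show (0:ℝ) < ρ xh - ρs xh by linarith)]
        exact ⟨v, hvD, hρsv, hvoff, hvpre, hvxh⟩
    obtain ⟨v, hvD, hρsv, hvoff, hvpre, hvxh⟩ := hv
    obtain ⟨σ₀, hσD, hσoff, hσlt, hσpre, hσlfp⟩ := hblock j
    -- Step 2: choose s > 0 such that s * (v x - ρs x) ≤ ρs x - σ₀ x on P j.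
    set Pf := (Set.toFinite (P j)).toFinset with hPf
    have hPfmem : ∀ x, x ∈ Pf ↔ x ∈ P j := by
      intro x
      rw [hPf]
      exact Set.Finite.mem_toFinset _
    have hPfne : Pf.Nonempty := ⟨xh, (hPfmem xh).mpr hxhP⟩
    set s : ℝ := Pf.inf' hPfne (fun x => (ρs x - σ₀ x) / (v x - ρs x + 1)) with hs
    have hdenv : ∀ x ∈ P j, 0 < v x - ρs x + 1 := by
      intro x hx
      have := hρsv x
      linarith
    have hs_pos : 0 < s := by
      rw [hs, Finset.lt_inf'_iff]
      intro x hx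
      have hxP := (hPfmem x).mp hx
      exact div_pos (by have := hσlt x hxP; linarith) (hdenv x hxP)
    have hs_le : ∀ x ∈ P j, s * (v x - ρs x) ≤ ρs x - σ₀ x := by
      intro x hx
      have h1 : s ≤ (ρs x - σ₀ x) / (v x - ρs x + 1) := by
        rw [hs]
        exact Finset.inf'_le _ ((hPfmem x).mpr hx)
      have h2 : s * (v x - ρs x + 1) ≤ ρs x - σ₀ x :=
        (le_div_iff₀ (hdenv x hx)).mp h1
      nlinarith
    -- Step 3: τs is a post-fixpoint on P j below ρs, strictly below at xh.
    set τs : X → ℝ := fun x => ρs x - s * (v x - ρs x) with hτsdef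
    have hτs_apply : ∀ x, τs x = ρs x - s * (v x - ρs x) := fun x => rfl
    have hτs_le_ρs : τs ≤ ρs := by
      intro x
      rw [hτs_apply]
      nlinarith [mul_nonneg hs_pos.le (sub_nonneg.mpr (hρsv x))]
    have hστs : σ₀ ≤ τs := by
      intro x
      by_cases hx : x ∈ P j
      · have := hs_le x hx
        rw [hτs_apply]
        linarith
      · have h1 := hσoff x hx
        have h2 := hvoff x hx
        rw [hτs_apply, h2, h1]
        simp
    have hτsD : τs ∈ D := hDup σ₀ hσD τs hστs
    have hτsoff : ∀ x, x ∉ P j → τs x = ρs x := by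
      intro x hx
      rw [hτs_apply, hvoff x hx]
      ring
    have hτspost : ∀ x ∈ P j, f τs x ≤ τs x := by
      set t' : ℝ := s / (1 + s) with ht'
      have h1s : (0:ℝ) < 1 + s := by linarith
      have ht'0 : 0 ≤ t' := div_nonneg hs_pos.le h1s.le
      have ht'1 : t' ≤ 1 := by rw [ht', div_le_one h1s]; linarith
      have ht'lt1 : t' < 1 := by rw [ht', div_lt_one h1s]; linarith
      have hcomb : t' • v + (1 - t') • τs = ρs := by
        funext x
        simp only [Pi.add_apply, Pi.smul_apply, smul_eq_mul, hτs_apply x, ht']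
        field_simp
        ring
      have hconcineq := hconc.2 v hvD τs hτsD (Or.inr (le_trans hτs_le_ρs hρsv)) t' ht'0 ht'1
      rw [hcomb, hfix] at hconcineq
      intro x hx
      have h1 : t' * f v x + (1 - t') * f τs x ≤ ρs x := by
        have h := hconcineq x
        simpa [smul_eq_mul] using h
      have h2 : v x ≤ f v x := hvpre x hx
      have h3 : (1 - t') * τs x = ρs x - t' * v x := by
        rw [hτs_apply, ht']
        field_simp
        ring
      have h5 : t' * v x ≤ t' * f v x := mul_le_mul_of_nonneg_left h2 ht'0
      have h4 : (1 - t') * f τs x ≤ (1 - t') * τs x := by linarith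
      exact le_of_mul_le_mul_left h4 (by linarith)
    -- Step 4: Knaster–Tarski on the interval [σ₀, τs].
    set T : Set (X → ℝ) := {ω | σ₀ ≤ ω ∧ ω ≤ τs ∧ ∀ x ∈ P j, ω x ≤ f ω x} with hT
    have hσT : σ₀ ∈ T := ⟨le_refl σ₀, hστs, hσpre⟩
    set τ : X → ℝ := fun x => sSup ((fun ω => ω x) '' T) with hτ
    have hτ_apply : ∀ x, τ x = sSup ((fun ω => ω x) '' T) := fun x => rfl
    have hbdd : ∀ x, BddAbove ((fun ω => ω x) '' T) := by
      intro x
      refine ⟨τs x, ?_⟩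
      rintro r ⟨ω, hω, rfl⟩
      exact hω.2.1 x
    have hneT : ∀ x, ((fun ω => ω x) '' T).Nonempty := fun x => ⟨σ₀ x, σ₀, hσT, rfl⟩
    have hleτ : ∀ ω ∈ T, ω ≤ τ := by
      intro ω hω x
      rw [hτ_apply]
      exact le_csSup (hbdd x) ⟨ω, hω, rfl⟩
    have hτle : τ ≤ τs := by
      intro x
      rw [hτ_apply]
      refine csSup_le (hneT x) ?_
      rintro r ⟨ω, hω, rfl⟩
      exact hω.2.1 x
    have hστ : σ₀ ≤ τ := hleτ σ₀ hσT
    have hτD : τ ∈ D := hDup σ₀ hσD τ hστ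
    have hτpre : ∀ x ∈ P j, τ x ≤ f τ x := by
      intro x hx
      rw [hτ_apply]
      refine csSup_le (hneT x) ?_
      rintro r ⟨ω, hω, rfl⟩
      exact le_trans (hω.2.2 x hx) (hmono ω (hDup σ₀ hσD ω hω.1) τ hτD (hleτ ω hω) x)
    have hτpost : ∀ x ∈ P j, f τ x ≤ τ x := by
      set ω' : X → ℝ := ovr (P j) τ (f τ) with hω'
      have hτω' : τ ≤ ω' := by
        intro x
        by_cases hx : x ∈ P j
        · rw [hω', ovr_mem hx]
          exact hτpre x hx
        · rw [hω', ovr_notMem hx]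
      have hω'τs : ω' ≤ τs := by
        intro x
        by_cases hx : x ∈ P j
        · rw [hω', ovr_mem hx]
          exact le_trans (hmono τ hτD τs hτsD hτle x) (hτspost x hx)
        · rw [hω', ovr_notMem hx]
          exact hτle x
      have hω'D : ω' ∈ D := hDup τ hτD ω' hτω'
      have hω'T : ω' ∈ T := by
        refine ⟨le_trans hστ hτω', hω'τs, ?_⟩
        intro x hx
        rw [hω', ovr_mem hx]
        exact hmono τ hτD ω' hω'D hτω' x
      intro x hx
      have h := hleτ ω' hω'T x
      rw [hω', ovr_mem hx] at h
      exact h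
    have hτfix : ∀ x ∈ P j, f τ x = τ x := fun x hx =>
      le_antisymm (hτpost x hx) (hτpre x hx)
    have hτoff : ∀ x, x ∉ P j → τ x = ρs x := by
      intro x hx
      have h1 := hστ x
      have h2 := hτle x
      rw [hσoff x hx] at h1
      rw [hτsoff x hx] at h2
      exact le_antisymm h2 h1
    have hfinal := hσlfp τ hτD hτoff hτfix hστ
    have h1 : ρs xh ≤ τ xh := hfinal xh
    have h2 : τ xh ≤ τs xh := hτle xh
    have h3 : τs xh < ρs xh := by
      rw [hτs_apply]
      nlinarith [mul_pos hs_pos (sub_pos.mpr hvxh)]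
    linarith
  -- Induction over the blocks.
  have main : ∀ n : ℕ, ∀ j : Fin k, (j : ℕ) ≤ n → ∀ x ∈ P j, ρ x ≤ ρs x := by
    intro n
    induction n with
    | zero =>
      intro j hj
      refine key j ?_
      intro i hij
      exact absurd (Fin.lt_def.mp hij) (by omega)
    | succ n IHn =>
      intro j hj
      refine key j ?_
      intro i hij x hx
      have h1 : (i : ℕ) ≤ n := by
        have := Fin.lt_def.mp hij
        omega
      exact le_antisymm (IHn i h1 x hx) (hρsρ x)
  intro x
  obtain ⟨i, hxi⟩ := hcov x
  exact le_trans (hρ'ρ x) (main (i : ℕ) i le_rfl x hxi)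
end
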